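/- arXiv:1309.2865 — 3 statements merged into one kernel-verified Lean document; each statement's English description precedes it below -/
import Mathlib

section
/- Fix N ∈ ℕ, h = 1/N, and define the backward recursion Y_{i} = Y_{i+1}(1 - h·Y_{i+1}²) for i = N-1, ..., 0 (a deterministic explicit Euler step for the driver f(y) = -y³). If |Y_N| ≥ 2√N, then for every i ∈ {0, ..., N}, |Y_i| ≥ 2^{2^{N-i}} · √N. -/
theorem explicit_euler_blowup (N : ℕ) (hN : 0 < N) (Y : ℕ → ℝ)
    (hrec : ∀ i < N, Y i = Y (i+1) * (1 - (1/(N:ℝ)) * (Y (i+1))^2))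
    (hterm : 2 * Real.sqrt N ≤ |Y N|) :
    ∀ i ≤ N, (2:ℝ)^(2^(N-i)) * Real.sqrt N ≤ |Y i| := by
  have hNpos : (0:ℝ) < N := by exact_mod_cast hN
  have hsq : Real.sqrt N ^ 2 = N := Real.sq_sqrt hNpos.le
  have hsqrtpos : 0 < Real.sqrt N := Real.sqrt_pos.mpr hNpos
  have key : ∀ j, j ≤ N → (2:ℝ)^(2^j) * Real.sqrt N ≤ |Y (N-j)| := by
    intro j
    induction j with
    | zero => intro _; simpa using hterm
    | succ j ih =>
      intro hj
      have hjN : j ≤ N := Nat.le_of_succ_le hj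
      have ha := ih hjN
      set a := |Y (N-j)| with hadef
      clear_value a
      have hanneg : 0 ≤ a := by rw [hadef]; exact abs_nonneg _
      have hM2 : (2:ℝ) ≤ (2:ℝ)^(2^j) := by
        calc (2:ℝ) = 2^(1:ℕ) := by norm_num
        _ ≤ 2^(2^j) := by
          apply pow_le_pow_right₀ (by norm_num) Nat.one_le_two_pow
      set M := (2:ℝ)^(2^j) with hMdef
      clear_value M
      have hMpos : 0 < M := by positivity
      have haM : M * Real.sqrt N ≤ a := ha
      have ha2 : M^2 * N ≤ a^2 := by
        calc M^2 * N = (M * Real.sqrt N)^2 := by rw [mul_pow, hsq]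
        _ ≤ a^2 := by apply pow_le_pow_left₀ (by positivity) haM
      have hidx : N - (j+1) < N := by omega
      have hrec' := hrec (N-(j+1)) hidx
      have hsucc : N - (j+1) + 1 = N - j := by omega
      rw [hsucc] at hrec'
      rw [hrec', abs_mul]
      have hYa : Y (N-j)^2 = a^2 := by rw [hadef]; exact (sq_abs _).symm
      have hb : M^2 ≤ (1/(N:ℝ)) * a^2 := by
        rw [one_div, inv_mul_eq_div, le_div_iff₀ hNpos]
        nlinarith
      have h1 : (1:ℝ) ≤ (1/(N:ℝ)) * a^2 := by nlinarith
      have hval : |1 - (1/(N:ℝ)) * Y (N-j)^2| = (1/(N:ℝ)) * a^2 - 1 := by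
        rw [hYa, abs_of_nonpos (by linarith)]; ring
      rw [hval]
      have hexp : (2:ℝ)^(2^(j+1)) = M^2 := by
        rw [hMdef, ← pow_mul]
        try congr 1
        try exact pow_succ 2 j
      rw [hexp, ← hadef]
      set b := (1/(N:ℝ)) * a^2 with hbdef
      clear_value b
      clear hMdef hadef hbdef ih hrec hrec' hterm hval hYa h1 hsucc hidx hsq ha hN
      have hM1 : (1:ℝ) ≤ M^2 - 1 := by nlinarith
      have step1 : M * Real.sqrt N * (M^2 - 1) ≤ a * (b - 1) := by
        have p1 : 0 ≤ a * (b - M^2) := mul_nonneg hanneg (sub_nonneg.mpr hb)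
        have p2 : 0 ≤ (a - M * Real.sqrt N) * (M^2 - 1) :=
          mul_nonneg (sub_nonneg.mpr haM) (by linarith)
        linarith [p1, p2]
      have step2 : M^2 * Real.sqrt N ≤ M * Real.sqrt N * (M^2 - 1) := by
        have hq : (0:ℝ) ≤ M^2 - 1 - M := by nlinarith
        nlinarith [mul_nonneg (mul_pos hMpos hsqrtpos).le hq]
      linarith
  intro i hi
  have := key (N - i) (Nat.sub_le _ _)
  rwa [Nat.sub_sub_self hi] at this
end

section
/- Let N be even, ξ = W_{1/2} where W is a standard Brownian motion, and define Y_N^{(N)} = ξ and Y_i^{(N)} = ψ^{∘(N-i)}(ξ) for i ≥ N/2, where ψ(x) = x - (1/N)x³. Then E[|Y_{N/2}^{(N)}|] ≥ 2^{2^{N/2}} · √N · P(|W_{1/2}| ≥ 2√N), and consequently E[|Y_{N/2}^{(N)}|] → +∞ as N → ∞. -/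
open MeasureTheory ProbabilityTheory Filter

private lemma euler_core_step {N a y : ℝ} (hN : 1 ≤ N) (ha : 2 ≤ a)
    (hy : a * Real.sqrt N ≤ |y|) :
    a ^ 2 * Real.sqrt N ≤ |y - 1 / N * y ^ 3| := by
  have hN0 : (0:ℝ) < N := by linarith
  have hs : Real.sqrt N ^ 2 = N := Real.sq_sqrt hN0.le
  have hs0 : (0:ℝ) ≤ Real.sqrt N := Real.sqrt_nonneg N
  have hy0 : 0 ≤ a * Real.sqrt N := by positivity
  have hy2 : a ^ 2 * N ≤ y ^ 2 := by
    have h1 : (a * Real.sqrt N) ^ 2 ≤ |y| ^ 2 := by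
      exact pow_le_pow_left₀ hy0 hy 2
    rw [sq_abs] at h1
    nlinarith
  have hinv : (0:ℝ) < 1 / N := by positivity
  have hNN : 1 / N * N = 1 := by field_simp
  have hq : a ^ 2 ≤ 1 / N * y ^ 2 := by
    have := mul_le_mul_of_nonneg_left hy2 hinv.le
    calc a ^ 2 = 1 / N * (a ^ 2 * N) := by field_simp
    _ ≤ 1 / N * y ^ 2 := this
  have hq1 : (1:ℝ) ≤ 1 / N * y ^ 2 := by nlinarith
  have e1 : y - 1 / N * y ^ 3 = -(y * (1 / N * y ^ 2 - 1)) := by ring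
  rw [e1, abs_neg, abs_mul, abs_of_nonneg (by linarith : (0:ℝ) ≤ 1 / N * y ^ 2 - 1)]
  have hpoly : (0:ℝ) ≤ a * (a ^ 2 - 1) - a ^ 2 := by nlinarith
  have h5 : a ^ 2 * Real.sqrt N ≤ a * Real.sqrt N * (a ^ 2 - 1) := by
    nlinarith [mul_nonneg hs0 hpoly]
  have h6 := mul_le_mul hy (by nlinarith : a ^ 2 - 1 ≤ 1 / N * y ^ 2 - 1)
    (by nlinarith : (0:ℝ) ≤ a ^ 2 - 1) (abs_nonneg y)
  linarith

private lemma euler_iter {M : ℕ} (hM : 0 < M) {x : ℝ}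
    (hx : 2 * Real.sqrt (2 * M) ≤ |x|) (k : ℕ) :
    2 ^ 2 ^ k * Real.sqrt (2 * M) ≤
      |(fun x : ℝ => x - (1 / (2 * (M:ℝ))) * x ^ 3)^[k] x| := by
  have hN1 : (1:ℝ) ≤ 2 * M := by
    have : (1:ℝ) ≤ (M:ℝ) := by exact_mod_cast hM
    linarith
  induction k with
  | zero => simpa using hx
  | succ k ih =>
    rw [Function.iterate_succ_apply']
    have ha : (2:ℝ) ≤ 2 ^ 2 ^ k := by
      calc (2:ℝ) = 2 ^ 1 := (pow_one 2).symm
      _ ≤ 2 ^ 2 ^ k := pow_le_pow_right₀ (by norm_num) Nat.one_le_two_pow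
    have := euler_core_step hN1 ha ih
    have hpow : (2:ℝ) ^ 2 ^ (k + 1) = (2 ^ 2 ^ k) ^ 2 := by
      rw [← pow_mul, ← pow_succ]
    rw [hpow]
    exact this

private lemma nat_64 : ∀ M : ℕ, 12 ≤ M → 64 * M ≤ 2 ^ M := by
  intro M hM
  induction M with
  | zero => omega
  | succ n ih =>
    rcases Nat.lt_or_ge n 12 with h | h
    · have hn : n = 11 := by omega
      subst hn; norm_num
    · have h1 := ih (by omega)
      have h2 : 2 ^ (n + 1) = 2 ^ n * 2 := pow_succ 2 n
      omega

private lemma gauss_tail {Ω : Type*} [MeasurableSpace Ω]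
    (P : Measure Ω) [IsProbabilityMeasure P]
    (ξ : Ω → ℝ) (hξ : Measurable ξ) (hlaw : P.map ξ = gaussianReal 0 (1/2))
    {x : ℝ} (hx : 0 ≤ x) :
    ENNReal.ofReal ((Real.sqrt Real.pi)⁻¹ * Real.exp (-(4 * x ^ 2)) * x)
      ≤ P {ω | x ≤ |ξ ω|} := by
  have hsm : MeasurableSet {y : ℝ | x ≤ |y|} :=
    measurableSet_le measurable_const measurable_abs
  have hmap : P {ω | x ≤ |ξ ω|} = (P.map ξ) {y : ℝ | x ≤ |y|} := by
    rw [Measure.map_apply hξ hsm]; rfl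
  rw [hmap, hlaw, gaussianReal_apply 0 (by norm_num : (1/2 : NNReal) ≠ 0)]
  have hsub : Set.Icc x (2 * x) ⊆ {y : ℝ | x ≤ |y|} := by
    intro y hy
    have : x ≤ y := hy.1
    simp only [Set.mem_setOf_eq]
    exact this.trans (le_abs_self y)
  calc ENNReal.ofReal ((Real.sqrt Real.pi)⁻¹ * Real.exp (-(4 * x ^ 2)) * x)
      = ENNReal.ofReal ((Real.sqrt Real.pi)⁻¹ * Real.exp (-(4 * x ^ 2)))
          * volume (Set.Icc x (2 * x)) := by
        rw [Real.volume_Icc, ← ENNReal.ofReal_mul (by positivity)]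
        norm_num; ring_nf
    _ = ∫⁻ y in Set.Icc x (2 * x),
          ENNReal.ofReal ((Real.sqrt Real.pi)⁻¹ * Real.exp (-(4 * x ^ 2))) := by
        rw [setLIntegral_const]
    _ ≤ ∫⁻ y in Set.Icc x (2 * x), gaussianPDF 0 (1/2) y := by
        apply setLIntegral_mono (measurable_gaussianPDF 0 (1/2))
        intro y hy
        rw [gaussianPDF_def]
        apply ENNReal.ofReal_le_ofReal
        rw [gaussianPDFReal]
        have hc : ((1/2 : NNReal) : ℝ) = 1/2 := by norm_num
        rw [hc]
        have h1 : Real.sqrt (2 * Real.pi * (1/2)) = Real.sqrt Real.pi := by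
          norm_num [mul_comm]
        rw [h1]
        have hy2 : y ^ 2 ≤ 4 * x ^ 2 := by
          have h0 : 0 ≤ y := hx.trans hy.1
          nlinarith [hy.1, hy.2]
        have : Real.exp (-(4 * x ^ 2)) ≤ Real.exp (-(y - 0) ^ 2 / (2 * (1/2))) := by
          apply Real.exp_le_exp.mpr
          rw [sub_zero]
          nlinarith
        have hsp : (0:ℝ) ≤ (Real.sqrt Real.pi)⁻¹ := by positivity
        exact mul_le_mul_of_nonneg_left this hsp
    _ ≤ ∫⁻ y in {y : ℝ | x ≤ |y|}, gaussianPDF 0 (1/2) y :=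
        lintegral_mono_set hsub

private lemma euler_lower {Ω : Type*} [MeasurableSpace Ω]
    (P : Measure Ω) [IsProbabilityMeasure P]
    (ξ : Ω → ℝ) (hξ : Measurable ξ) (M : ℕ) (hM : 0 < M) :
    ENNReal.ofReal ((2:ℝ)^(2^M) * Real.sqrt (2*M)) * P {ω | 2 * Real.sqrt (2*M) ≤ |ξ ω|}
      ≤ ∫⁻ ω, ENNReal.ofReal |(fun x : ℝ => x - (1/(2*(M:ℝ))) * x^3)^[M] (ξ ω)| ∂P := by
  set s : Set Ω := {ω | 2 * Real.sqrt (2*M) ≤ |ξ ω|} with hs_def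
  have hs : MeasurableSet s := measurableSet_le measurable_const hξ.abs
  set c : ENNReal := ENNReal.ofReal ((2:ℝ)^(2^M) * Real.sqrt (2*M)) with hc_def
  calc c * P s = ∫⁻ ω, s.indicator (fun _ => c) ω ∂P := by
        rw [lintegral_indicator hs, setLIntegral_const]
    _ ≤ ∫⁻ ω, ENNReal.ofReal |(fun x : ℝ => x - (1/(2*(M:ℝ))) * x^3)^[M] (ξ ω)| ∂P := by
        apply lintegral_mono
        intro ω
        by_cases hω : ω ∈ s
        · rw [Set.indicator_of_mem hω]
          exact ENNReal.ofReal_le_ofReal (euler_iter hM hω M)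
        · rw [Set.indicator_of_notMem hω]; exact zero_le

theorem euler_scheme_diverges {Ω : Type*} [MeasurableSpace Ω]
    (P : Measure Ω) [IsProbabilityMeasure P]
    (ξ : Ω → ℝ) (hξ : Measurable ξ) (hlaw : P.map ξ = gaussianReal 0 (1/2)) :
    (∀ M : ℕ, 0 < M →
      ENNReal.ofReal ((2:ℝ)^(2^M) * Real.sqrt (2*M)) * P {ω | 2 * Real.sqrt (2*M) ≤ |ξ ω|}
        ≤ ∫⁻ ω, ENNReal.ofReal |(fun x : ℝ => x - (1/(2*(M:ℝ))) * x^3)^[M] (ξ ω)| ∂P)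
    ∧ Tendsto
        (fun M : ℕ => ∫⁻ ω, ENNReal.ofReal |(fun x : ℝ => x - (1/(2*(M:ℝ))) * x^3)^[M] (ξ ω)| ∂P)
        atTop (nhds ⊤) := by
  constructor
  · intro M hM
    exact euler_lower P ξ hξ M hM
  · apply tendsto_nhds_top_mono (f := fun M : ℕ => ENNReal.ofReal (M:ℝ))
    · have : (fun M : ℕ => ENNReal.ofReal (M:ℝ)) = fun M : ℕ => (M : ENNReal) := by
        funext M; exact ENNReal.ofReal_natCast M
      rw [this]
      exact ENNReal.tendsto_nat_nhds_top
    · filter_upwards [eventually_ge_atTop 12] with M hM12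
      have hM : 0 < M := by omega
      set x : ℝ := 2 * Real.sqrt (2*M) with hx_def
      have hx0 : (0:ℝ) ≤ x := by positivity
      have htail := gauss_tail P ξ hξ hlaw hx0
      have h1 := euler_lower P ξ hξ M hM
      have hsq : Real.sqrt (2*M) ^ 2 = 2*(M:ℝ) := Real.sq_sqrt (by positivity)
      -- real inequality
      have hexp : Real.exp (32 * M) ≤ (2:ℝ) ^ 2 ^ M := by
        have hlog : Real.log 2 ≥ 1/2 := by
          have := Real.log_two_gt_d9; linarith
        have h64 : (64:ℝ) * M ≤ (2:ℝ) ^ M := by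
          have := nat_64 M hM12
          calc (64:ℝ) * M = ((64 * M : ℕ) : ℝ) := by push_cast; ring
          _ ≤ ((2 ^ M : ℕ) : ℝ) := by exact_mod_cast this
          _ = (2:ℝ) ^ M := by push_cast; ring
        have hpow : Real.exp (((2 ^ M : ℕ) : ℝ) * Real.log 2) = (2:ℝ) ^ 2 ^ M := by
          rw [Real.exp_nat_mul, Real.exp_log (by norm_num : (0:ℝ) < 2)]
        rw [← hpow]
        apply Real.exp_le_exp.mpr
        push_cast
        nlinarith [mul_le_mul_of_nonneg_right h64 (Real.log_pos one_lt_two).le,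
          mul_le_mul_of_nonneg_left hlog (by positivity : (0:ℝ) ≤ 64 * (M:ℝ))]
      have hE : (1:ℝ) ≤ Real.exp (-(32 * M)) * (2:ℝ) ^ 2 ^ M := by
        rw [Real.exp_neg, inv_mul_eq_div, le_div_iff₀ (Real.exp_pos _), one_mul]
        exact hexp
      have hpi2 : Real.sqrt Real.pi ≤ 2 := by
        rw [show (2:ℝ) = Real.sqrt 4 by
          rw [show (4:ℝ) = 2^2 by norm_num, Real.sqrt_sq (by norm_num : (0:ℝ) ≤ 2)]]
        exact Real.sqrt_le_sqrt (by nlinarith [Real.pi_lt_d2])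
      have hpii : (1:ℝ)/2 ≤ (Real.sqrt Real.pi)⁻¹ := by
        rw [show (1:ℝ)/2 = 2⁻¹ by norm_num]
        exact inv_anti₀ (Real.sqrt_pos.mpr Real.pi_pos) hpi2
      have harg : -(4 * x ^ 2) = -(32 * (M:ℝ)) := by
        rw [hx_def]; rw [mul_pow, hsq]; ring
      have hreal : (M:ℝ) ≤ (2:ℝ)^(2^M) * Real.sqrt (2*M)
          * ((Real.sqrt Real.pi)⁻¹ * Real.exp (-(4 * x ^ 2)) * x) := by
        rw [harg, hx_def]
        set T : ℝ := (2:ℝ) ^ 2 ^ M with hT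
        set E : ℝ := Real.exp (-(32 * (M:ℝ))) with hEd
        set I : ℝ := (Real.sqrt Real.pi)⁻¹ with hI
        set s2 : ℝ := Real.sqrt (2*M) with hs2
        have hEq : T * s2 * (I * E * (2 * s2)) = 4 * (M:ℝ) * (E * T) * I := by
          have h7 : s2 * s2 = 2 * (M:ℝ) := by nlinarith [hsq]
          linear_combination (2 * T * E * I) * h7
        rw [hEq]
        have hM0 : (0:ℝ) ≤ 4 * (M:ℝ) := by positivity
        have hstep : 4 * (M:ℝ) * 1 * (1/2) ≤ 4 * (M:ℝ) * (E * T) * I := by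
          apply mul_le_mul (mul_le_mul_of_nonneg_left hE hM0) hpii (by norm_num)
          positivity
        have hM1 : (1:ℝ) ≤ (M:ℝ) := by exact_mod_cast hM
        nlinarith [hstep]
      calc ENNReal.ofReal (M:ℝ)
          ≤ ENNReal.ofReal ((2:ℝ)^(2^M) * Real.sqrt (2*M)
              * ((Real.sqrt Real.pi)⁻¹ * Real.exp (-(4 * x ^ 2)) * x)) :=
            ENNReal.ofReal_le_ofReal hreal
        _ = ENNReal.ofReal ((2:ℝ)^(2^M) * Real.sqrt (2*M))
              * ENNReal.ofReal ((Real.sqrt Real.pi)⁻¹ * Real.exp (-(4 * x ^ 2)) * x) :=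
            ENNReal.ofReal_mul (by positivity)
        _ ≤ ENNReal.ofReal ((2:ℝ)^(2^M) * Real.sqrt (2*M))
              * P {ω | x ≤ |ξ ω|} := mul_le_mul' le_rfl htail
        _ ≤ _ := h1
end

section
/- Suppose for a family of random variables (or reals) one has the one-step stability bound: A_i + ρ B_i h ≤ (1+ch)(A_{i+1} + (ρ/4) B_{i+1} h) + H_i for i = 0,…,N-1, where A_i, B_i, H_i ≥ 0, ρ, c, h > 0. Then max_{0≤i≤N} A_i + (3ρ/4) Σ_{i=0}^{N-1} B_i h ≤ C ( A_N + (ρ/4) B_N h + Σ_{i=0}^{N-1} H_i e^{c i h} ) for a constant C depending only on ρ, c, and Nh = T. -/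
theorem fundamental_lemma_aggregation (ρ c T : ℝ) (hρ : 0 < ρ) (hc : 0 < c) (hT : 0 < T) :
    ∃ C : ℝ, 0 < C ∧ ∀ (N : ℕ) (h : ℝ) (A B H : ℕ → ℝ),
      0 < h → (N : ℝ) * h = T →
      (∀ i, 0 ≤ A i) → (∀ i, 0 ≤ B i) → (∀ i, 0 ≤ H i) →
      (∀ i < N, A i + ρ * B i * h ≤ (1 + c*h) * (A (i+1) + (ρ/4) * B (i+1) * h) + H i) →
      ∀ i ≤ N, A i + (3*ρ/4) * ∑ j ∈ Finset.range N, B j * h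
        ≤ C * (A N + (ρ/4) * B N * h
               + ∑ j ∈ Finset.range N, H j * Real.exp (c * (j:ℝ) * h)) := by
  refine ⟨2 * Real.exp (c * T), by positivity, ?_⟩
  intro N h A B H hh hNh hA hB hH hstep i hi
  have hInn : ∀ k, 0 ≤ A k + ρ/4 * B k * h := fun k =>
    add_nonneg (hA k) (mul_nonneg (mul_nonneg (by linarith) (hB k)) hh.le)
  have h1 : (1:ℝ) ≤ 1 + c * h := by nlinarith
  have h0 : (0:ℝ) ≤ 1 + c * h := by linarith
  -- key backward induction (discrete Gronwall with retained B-sum)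
  have key : ∀ d m, m + d = N →
      (A m + ρ/4 * B m * h) + 3*ρ/4 * ∑ j ∈ Finset.Ico m N, B j * h ≤
        (1 + c*h)^d * (A N + ρ/4 * B N * h)
          + ∑ j ∈ Finset.Ico m N, (1 + c*h)^(j - m) * H j := by
    intro d
    induction d with
    | zero =>
      intro m hmN
      subst hmN
      simp
    | succ d ih =>
      intro m hmN
      have hmN' : m < N := by omega
      have hIH := ih (m+1) (by omega)
      rw [Finset.sum_eq_sum_Ico_succ_bot hmN' (fun j => B j * h),
          Finset.sum_eq_sum_Ico_succ_bot hmN' (fun j => (1 + c*h)^(j - m) * H j)]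
      have hst := hstep m hmN'
      set S := ∑ j ∈ Finset.Ico (m+1) N, B j * h with hS
      have hSnn : 0 ≤ S := Finset.sum_nonneg fun j _ => mul_nonneg (hB j) hh.le
      have step1 : (A m + ρ/4 * B m * h) + 3*ρ/4 * (B m * h + S) ≤
          (1 + c*h) * ((A (m+1) + ρ/4 * B (m+1) * h) + 3*ρ/4 * S) + H m := by
        nlinarith [mul_nonneg (mul_nonneg hc.le hh.le) hSnn]
      have step2 : (1 + c*h) * ((A (m+1) + ρ/4 * B (m+1) * h) + 3*ρ/4 * S) ≤
          (1+c*h) * ((1 + c*h)^d * (A N + ρ/4 * B N * h)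
            + ∑ j ∈ Finset.Ico (m+1) N, (1 + c*h)^(j - (m+1)) * H j) :=
        mul_le_mul_of_nonneg_left hIH h0
      have eqsum : (1+c*h) * ∑ j ∈ Finset.Ico (m+1) N, (1 + c*h)^(j - (m+1)) * H j
          = ∑ j ∈ Finset.Ico (m+1) N, (1 + c*h)^(j - m) * H j := by
        rw [Finset.mul_sum]
        refine Finset.sum_congr rfl fun j hj => ?_
        have hjm : j - m = (j - (m+1)) + 1 := by
          have := (Finset.mem_Ico.mp hj).1; omega
        rw [hjm, pow_succ]
        ring
      calc (A m + ρ/4 * B m * h) + 3*ρ/4 * (B m * h + S)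
          ≤ (1 + c*h) * ((A (m+1) + ρ/4 * B (m+1) * h) + 3*ρ/4 * S) + H m := step1
        _ ≤ (1+c*h) * ((1 + c*h)^d * (A N + ρ/4 * B N * h)
              + ∑ j ∈ Finset.Ico (m+1) N, (1 + c*h)^(j - (m+1)) * H j) + H m := by linarith
        _ = (1 + c*h)^(d+1) * (A N + ρ/4 * B N * h)
              + ((1 + c*h)^(m - m) * H m
                + ∑ j ∈ Finset.Ico (m+1) N, (1 + c*h)^(j - m) * H j) := by
            rw [mul_add, eqsum, Nat.sub_self, pow_zero, one_mul, pow_succ]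
            ring
  -- exponential bounds
  have hexp : ∀ m : ℕ, (1+c*h)^m ≤ Real.exp (c * m * h) := by
    intro m
    calc (1+c*h)^m ≤ (Real.exp (c*h))^m := by
          refine pow_le_pow_left₀ h0 ?_ m
          linarith [Real.add_one_le_exp (c*h)]
      _ = Real.exp (c * m * h) := by
          rw [← Real.exp_nat_mul]; ring_nf
  have hexpT : ∀ m : ℕ, m ≤ N → (1+c*h)^m ≤ Real.exp (c*T) := by
    intro m hm
    calc (1+c*h)^m ≤ (1+c*h)^N := pow_le_pow_right₀ h1 hm
      _ ≤ Real.exp (c * N * h) := hexp N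
      _ = Real.exp (c*T) := by rw [show c * (N:ℝ) * h = c*T by rw [← hNh]; ring]
  have hexpT1 : (1:ℝ) ≤ Real.exp (c*T) := Real.one_le_exp (by positivity)
  have hsumH : ∀ m : ℕ, ∑ j ∈ Finset.Ico m N, (1 + c*h)^(j - m) * H j
      ≤ ∑ j ∈ Finset.range N, H j * Real.exp (c * (j:ℝ) * h) := by
    intro m
    calc ∑ j ∈ Finset.Ico m N, (1 + c*h)^(j - m) * H j
        ≤ ∑ j ∈ Finset.Ico m N, H j * Real.exp (c * (j:ℝ) * h) := by
          refine Finset.sum_le_sum fun j _ => ?_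
          rw [mul_comm (H j)]
          refine mul_le_mul_of_nonneg_right ?_ (hH j)
          calc (1+c*h)^(j-m) ≤ (1+c*h)^j := pow_le_pow_right₀ h1 (Nat.sub_le j m)
            _ ≤ Real.exp (c * (j:ℝ) * h) := hexp j
      _ ≤ ∑ j ∈ Finset.range N, H j * Real.exp (c * (j:ℝ) * h) := by
          rw [Finset.range_eq_Ico]
          refine Finset.sum_le_sum_of_subset_of_nonneg
            (Finset.Ico_subset_Ico (Nat.zero_le m) le_rfl) fun j _ _ =>
            mul_nonneg (hH j) (Real.exp_pos _).le
  have hsumHnn : 0 ≤ ∑ j ∈ Finset.range N, H j * Real.exp (c * (j:ℝ) * h) :=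
    Finset.sum_nonneg fun j _ => mul_nonneg (hH j) (Real.exp_pos _).le
  -- main bound for each m ≤ N
  have main : ∀ m, m ≤ N →
      (A m + ρ/4 * B m * h) + 3*ρ/4 * ∑ j ∈ Finset.Ico m N, B j * h ≤
        Real.exp (c*T) * ((A N + ρ/4 * B N * h)
          + ∑ j ∈ Finset.range N, H j * Real.exp (c * (j:ℝ) * h)) := by
    intro m hm
    have k := key (N - m) m (by omega)
    have e1 : (1 + c*h)^(N-m) * (A N + ρ/4 * B N * h)
        ≤ Real.exp (c*T) * (A N + ρ/4 * B N * h) :=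
      mul_le_mul_of_nonneg_right (hexpT (N-m) (Nat.sub_le N m)) (hInn N)
    have e2 := hsumH m
    nlinarith [hInn N, mul_le_mul_of_nonneg_right hexpT1 hsumHnn]
  -- conclude
  have m1 := main i hi
  have m0 := main 0 (Nat.zero_le N)
  rw [Finset.range_eq_Ico] at m0 ⊢
  have hBsum : 0 ≤ ∑ j ∈ Finset.Ico i N, B j * h :=
    Finset.sum_nonneg fun j _ => mul_nonneg (hB j) hh.le
  have hB0 : 0 ≤ ρ/4 * B i * h := mul_nonneg (mul_nonneg (by linarith) (hB i)) hh.le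
  have hI0 : 0 ≤ A 0 + ρ/4 * B 0 * h := hInn 0
  simp only [Finset.range_eq_Ico] at m1
  have t1 : 0 ≤ 3*ρ/4 * ∑ j ∈ Finset.Ico i N, B j * h :=
    mul_nonneg (by linarith) hBsum
  linarith
end
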